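/- Let θ > 0 and X ∈ L²(P). If X − E[X] ≤ 1/θ almost surely (i.e., X lies in the monotone region G_θ), then for the probability measure Q with density dQ/dP = 1 − θ(X − E[X]) (which is nonnegative and integrates to 1), the MMV objective evaluated at Q equals the MV value: E^Q[X + (1/(2θ))(dQ/dP − 1)] = E[X] − (θ/2)·Var(X). -/

import Mathlib

open MeasureTheory ProbabilityTheory

/-- On the monotone region `G_θ`, the MMV objective evaluated at the measure
    with density `Z = 1 - θ(X - E[X])` equals the MV value:
    `E[Z·(X + (1/(2θ))(Z - 1))] = E[X] - (θ/2) Var(X)`; moreover `Z ≥ 0` a.s.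
    and `E[Z] = 1`. -/
theorem mmv_eq_mv_on_monotone_region {Ω : Type*} [MeasurableSpace Ω]
    (μ : Measure Ω) [IsProbabilityMeasure μ]
    (θ : ℝ) (hθ : 0 < θ) (X : Ω → ℝ) (hX : MemLp X 2 μ)
    (hmono : ∀ᵐ ω ∂μ, X ω - ∫ ω', X ω' ∂μ ≤ 1 / θ) :
    let Z : Ω → ℝ := fun ω => 1 - θ * (X ω - ∫ ω', X ω' ∂μ)
    (∀ᵐ ω ∂μ, 0 ≤ Z ω) ∧ (∫ ω, Z ω ∂μ = 1) ∧
      ∫ ω, Z ω * (X ω + (1 / (2 * θ)) * (Z ω - 1)) ∂μ =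
        (∫ ω, X ω ∂μ) - (θ / 2) * variance X μ := by
  intro Z
  set m : ℝ := ∫ ω', X ω' ∂μ with hm
  have hYmem : MemLp (fun ω => X ω - m) 2 μ := hX.sub (memLp_const m)
  have hYint : Integrable (fun ω => X ω - m) μ :=
    hYmem.integrable one_le_two
  have hY2int : Integrable (fun ω => (X ω - m) ^ 2) μ := hYmem.integrable_sq
  have hXint : Integrable X μ := hX.integrable one_le_two
  have hYzero : ∫ ω, (X ω - m) ∂μ = 0 := by
    rw [integral_sub hXint (integrable_const m), integral_const]
    simp [hm]
  have hvar : variance X μ = ∫ ω, (X ω - m) ^ 2 ∂μ := variance_eq_integral hX.aemeasurable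
  refine ⟨?_, ?_, ?_⟩
  · filter_upwards [hmono] with ω hω
    have : θ * (X ω - m) ≤ 1 := by
      have h := (le_div_iff₀ hθ).mp hω
      linarith
    simp only [Z]
    linarith
  · have : ∫ ω, (1 - θ * (X ω - m)) ∂μ = 1 := by
      rw [integral_sub (integrable_const 1) (hYint.const_mul θ),
        integral_const, integral_const_mul, hYzero]
      simp
    simpa [Z] using this
  · have hθne : θ ≠ 0 := ne_of_gt hθ
    have heq : ∀ ω, Z ω * (X ω + (1 / (2 * θ)) * (Z ω - 1)) =
        m + (1 / 2 - θ * m) * (X ω - m) - (θ / 2) * (X ω - m) ^ 2 := by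
      intro ω
      simp only [Z]
      field_simp
      ring
    calc ∫ ω, Z ω * (X ω + (1 / (2 * θ)) * (Z ω - 1)) ∂μ
        = ∫ ω, (m + (1 / 2 - θ * m) * (X ω - m) - (θ / 2) * (X ω - m) ^ 2) ∂μ := by
          exact integral_congr_ae (Filter.Eventually.of_forall heq)
      _ = m - (θ / 2) * variance X μ := by
          have h1 : Integrable (fun ω => (1 / 2 - θ * m) * (X ω - m) - (θ / 2) * (X ω - m) ^ 2) μ :=
            (hYint.const_mul _).sub (hY2int.const_mul _)
          simp_rw [add_sub_assoc]
          rw [integral_add (integrable_const m) h1, integral_const,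
            integral_sub (hYint.const_mul _) (hY2int.const_mul _),
            integral_const_mul, integral_const_mul, hYzero, hvar]
          simp only [measure_univ, ENNReal.toReal_one, probReal_univ, one_smul]
          ring
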